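/- Let g₁ = 3⁹(3⁹φ³ + 4·3⁵φ² + 10φ), g₂ = 3^{14}(-3⁴φ² - 4φ), g₃ = 3^{18}φ in ℤ[φ], and define S₀ = 3, S₁ = g₁, S₂ = g₁S₁ - 2g₂, and S_n = g₁S_{n-1} - g₂S_{n-2} + g₃S_{n-3} for n ≥ 3. Then for every n ≥ 1, S_n = 3^{2n+7} r for some r ∈ R^{(3)}, where R^{(3)} is the set of polynomials d₁φ + Σ_{n=2}^{N} d_n 3^{4(n-1)} φⁿ with integer coefficients d_n. -/

import Mathlib

open Polynomial Finset

def R3 : Set (Polynomial ℤ) :=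
  {f | ∃ (N : ℕ) (d : ℕ → ℤ),
    f = (d 1 : Polynomial ℤ) * X + ∑ i ∈ Icc 2 N, (d i : Polynomial ℤ) * 3 ^ (4 * (i - 1)) * X ^ i}

/-- coefficient characterization -/
def Good (f : Polynomial ℤ) : Prop :=
  f.coeff 0 = 0 ∧ ∀ i, 2 ≤ i → (3:ℤ) ^ (4 * (i - 1)) ∣ f.coeff i

lemma intCast_eq_C (c : ℤ) : ((c : ℤ) : Polynomial ℤ) = C c := by
  rw [← C_eq_intCast, Int.cast_id]

lemma good_add {f g : Polynomial ℤ} (hf : Good f) (hg : Good g) : Good (f + g) := by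
  refine ⟨by simp [hf.1, hg.1], fun i hi => ?_⟩
  simpa using dvd_add (hf.2 i hi) (hg.2 i hi)

lemma good_X : Good (X : Polynomial ℤ) := by
  refine ⟨by simp, fun i hi => ?_⟩
  rw [coeff_X, if_neg (by omega)]
  exact dvd_zero _

lemma good_C_mul (a : ℤ) {f : Polynomial ℤ} (hf : Good f) :
    Good ((a : Polynomial ℤ) * f) := by
  rw [← C_eq_intCast]
  exact ⟨by simp [hf.1], fun i hi => by simpa using Dvd.dvd.mul_left (hf.2 i hi) a⟩

lemma good_mul (a : ℤ) (m : ℕ) (hm : 1 ≤ m) (ha : (3:ℤ) ^ (4 * m) ∣ a)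
    {f : Polynomial ℤ} (hf : Good f) : Good ((a : Polynomial ℤ) * X ^ m * f) := by
  rw [intCast_eq_C, mul_comm (C a * X ^ m) f, ← mul_assoc]
  constructor
  · rw [coeff_mul_X_pow', if_neg (by omega)]
  · intro i hi
    rw [coeff_mul_X_pow']
    split_ifs with h
    · rw [coeff_mul_C]
      rcases Nat.lt_or_ge (i - m) 2 with h2 | h2
      · interval_cases hh : (i - m)
        · rw [hf.1]; simp
        · have h1 : i - 1 = m := by omega
          rw [h1]
          exact Dvd.dvd.mul_left ha _
      · have h3 : 4 * (i - 1) = 4 * (i - m - 1) + 4 * m := by omega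
        rw [h3, pow_add]
        exact mul_dvd_mul (hf.2 _ h2) ha
    · simp

lemma mem_R3_of_good {f : Polynomial ℤ} (hf : Good f) : f ∈ R3 := by
  classical
  refine ⟨f.natDegree, fun i => if i = 1 then f.coeff 1 else f.coeff i / 3 ^ (4 * (i - 1)), ?_⟩
  ext j
  rw [coeff_add, finset_sum_coeff]
  have hterm : ∀ i ∈ Icc 2 f.natDegree,
      ((((if i = 1 then f.coeff 1 else f.coeff i / 3 ^ (4 * (i - 1))) : ℤ) : Polynomial ℤ) *
        3 ^ (4 * (i - 1)) * X ^ i).coeff j =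
      if j = i then
        (if i = 1 then f.coeff 1 else f.coeff i / 3 ^ (4 * (i - 1))) * 3 ^ (4 * (i - 1))
      else 0 := by
    intro i _
    rw [show (((if i = 1 then f.coeff 1 else f.coeff i / 3 ^ (4 * (i - 1))) : ℤ) : Polynomial ℤ) *
          3 ^ (4 * (i - 1)) * X ^ i =
        C ((if i = 1 then f.coeff 1 else f.coeff i / 3 ^ (4 * (i - 1))) * 3 ^ (4 * (i - 1))) * X ^ i
      by rw [← intCast_eq_C]; push_cast; ring]
    rw [coeff_C_mul, coeff_X_pow, mul_ite, mul_one, mul_zero]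
  rw [Finset.sum_congr rfl hterm, Finset.sum_ite_eq]
  simp only [reduceIte, mem_Icc, intCast_eq_C, coeff_C_mul, coeff_X]
  rcases Nat.lt_or_ge j 2 with hj | hj
  · interval_cases j
    · simpa using hf.1
    · norm_num
  · rw [if_neg (by omega), mul_zero, zero_add, if_neg (by omega : ¬ j = 1)]
    rcases le_or_gt j f.natDegree with hle | hlt
    · rw [if_pos ⟨hj, hle⟩, Int.ediv_mul_cancel (hf.2 j hj)]
    · rw [if_neg (by omega), Polynomial.coeff_eq_zero_of_natDegree_lt hlt]

noncomputable def stepA (a : Polynomial ℤ) : Polynomial ℤ :=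
  ((3^16 : ℤ) : Polynomial ℤ) * X ^ 3 * a + ((4*3^12 : ℤ) : Polynomial ℤ) * X ^ 2 * a +
    ((10*3^7 : ℤ) : Polynomial ℤ) * X ^ 1 * a

noncomputable def stepB (b : Polynomial ℤ) : Polynomial ℤ :=
  ((3^14 : ℤ) : Polynomial ℤ) * X ^ 2 * b + ((4*3^10 : ℤ) : Polynomial ℤ) * X ^ 1 * b

lemma good_stepA {a : Polynomial ℤ} (ha : Good a) : Good (stepA a) :=
  good_add (good_add (good_mul _ 3 (by norm_num) (by norm_num) ha)
    (good_mul _ 2 (by norm_num) (by norm_num) ha))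
    (good_mul _ 1 (by norm_num) (by norm_num) ha)

lemma good_stepB {b : Polynomial ℤ} (hb : Good b) : Good (stepB b) :=
  good_add (good_mul _ 2 (by norm_num) (by norm_num) hb)
    (good_mul _ 1 (by norm_num) (by norm_num) hb)

theorem newton_sums_p3 (S : ℕ → Polynomial ℤ)
    (hS0 : S 0 = 3)
    (hS1 : S 1 = 3 ^ 9 * (3 ^ 9 * X ^ 3 + 4 * 3 ^ 5 * X ^ 2 + 10 * X))
    (hS2 : S 2 = 3 ^ 9 * (3 ^ 9 * X ^ 3 + 4 * 3 ^ 5 * X ^ 2 + 10 * X) * S 1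
      - 2 * (3 ^ 14 * (-(3 ^ 4) * X ^ 2 - 4 * X)))
    (hrec : ∀ n, 3 ≤ n →
      S n = 3 ^ 9 * (3 ^ 9 * X ^ 3 + 4 * 3 ^ 5 * X ^ 2 + 10 * X) * S (n - 1)
        - (3 ^ 14 * (-(3 ^ 4) * X ^ 2 - 4 * X)) * S (n - 2)
        + (3 ^ 18 * X) * S (n - 3)) :
    ∀ n, 1 ≤ n → ∃ r ∈ R3, S n = 3 ^ (2 * n + 7) * r := by
  set P : ℕ → Prop := fun n => ∃ r, Good r ∧ S n = 3 ^ (2 * n + 7) * r with hP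
  have h1 : P 1 := by
    refine ⟨((3^9 : ℤ) : Polynomial ℤ) * X ^ 2 * X + ((4*3^5 : ℤ) : Polynomial ℤ) * X ^ 1 * X
        + ((10 : ℤ) : Polynomial ℤ) * X, ?_, by rw [hS1]; push_cast; ring⟩
    exact good_add (good_add (good_mul _ 2 (by norm_num) (by norm_num) good_X)
      (good_mul _ 1 (by norm_num) (by norm_num) good_X)) (good_C_mul 10 good_X)
  obtain ⟨r1, hr1, he1⟩ := h1
  have h2 : P 2 := by
    refine ⟨stepA r1 + (((2*3^7 : ℤ) : Polynomial ℤ) * X ^ 1 * X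
        + ((8*3^3 : ℤ) : Polynomial ℤ) * X), ?_, ?_⟩
    · exact good_add (good_stepA hr1) (good_add
        (good_mul _ 1 (by norm_num) (by norm_num) good_X) (good_C_mul _ good_X))
    · rw [hS2, he1, stepA]; push_cast; ring
  obtain ⟨r2, hr2, he2⟩ := h2
  have h3 : P 3 := by
    refine ⟨stepA r2 + stepB r1 + ((3^6 : ℤ) : Polynomial ℤ) * X, ?_, ?_⟩
    · exact good_add (good_add (good_stepA hr2) (good_stepB hr1)) (good_C_mul _ good_X)
    · rw [hrec 3 le_rfl]
      show _ * S 2 - _ * S 1 + _ * S 0 = _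
      rw [he1, he2, hS0, stepA, stepB]; push_cast; ring
  have key : ∀ k, P (k+1) ∧ P (k+2) ∧ P (k+3) := by
    intro k
    induction k with
    | zero => exact ⟨⟨r1, hr1, he1⟩, ⟨r2, hr2, he2⟩, h3⟩
    | succ k ih =>
      obtain ⟨⟨a, ha, hea⟩, ⟨b, hb, heb⟩, ⟨c, hc, hec⟩⟩ := ih
      refine ⟨⟨b, hb, heb⟩, ⟨c, hc, hec⟩, ?_⟩
      refine ⟨stepA c + stepB b + ((3^12 : ℤ) : Polynomial ℤ) * X ^ 1 * a, ?_, ?_⟩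
      · exact good_add (good_add (good_stepA hc) (good_stepB hb))
          (good_mul (3^12) 1 (by norm_num) (by norm_num) ha)
      · rw [hrec (k+4) (by omega)]
        show _ * S (k+3) - _ * S (k+2) + _ * S (k+1) = _
        rw [hea, heb, hec, stepA, stepB]
        push_cast; ring
  intro n hn
  obtain ⟨m, rfl⟩ : ∃ m, n = m + 1 := ⟨n - 1, by omega⟩
  obtain ⟨r, hr, he⟩ := (key m).1
  exact ⟨r, mem_R3_of_good hr, he⟩
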